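/- Let α ∈ (0,1), let N ≥ 2 be an integer with 1 − 2·α^(N−1) > 0, and suppose B·(P_H − P_L)·(1 − 2·α^(N−1)) > c_max (i.e. B > B_GA). Then there exists exactly one c* ∈ (0, c_max) satisfying the GA equilibrium equation 1 − 2·((α − 1)·F(c*) + 1)^(N−1) = c*/(B·(P_H − P_L)). -/

import Mathlib

open Set

/-- When `B > B_GA` (i.e. `B (P_H - P_L)(1 - 2 α^(N-1)) > c_max`), the GA equilibrium
equation has a unique solution `c* ∈ (0, c_max)`. -/
theorem ga_unique_equilibrium_threshold
    (c_max P_L P_H B α : ℝ) (N : ℕ) (F : ℝ → ℝ)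
    (hcmax : 0 < c_max)
    (hα0 : 0 < α) (hα1 : α < 1) (hN : 2 ≤ N)
    (hαN : 0 < 1 - 2 * α ^ (N - 1))
    (hFcont : ContinuousOn F (Icc 0 c_max))
    (hFmono : MonotoneOn F (Icc 0 c_max))
    (hF0 : F 0 = 0) (hFmax : F c_max = 1)
    (hFconc : StrictConcaveOn ℝ (Icc 0 c_max) F)
    (hPL : 1 / 2 ≤ P_L) (hPLH : P_L < P_H) (hPH : P_H ≤ 1)
    (hBpos : 0 < B)
    (hB : B * (P_H - P_L) * (1 - 2 * α ^ (N - 1)) > c_max) :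
    ∃! c : ℝ, c ∈ Ioo 0 c_max ∧
      1 - 2 * ((α - 1) * F c + 1) ^ (N - 1) = c / (B * (P_H - P_L)) := by
  have hΔ : 0 < P_H - P_L := by linarith
  have hD : 0 < B * (P_H - P_L) := mul_pos hBpos hΔ
  set D := B * (P_H - P_L) with hDdef
  set K := N - 1 with hKdef
  have hKne : K ≠ 0 := by omega
  set g : ℝ → ℝ := fun c => 1 - 2 * ((α - 1) * F c + 1) ^ K - c / D with hgdef
  have heq : ∀ c : ℝ, (1 - 2 * ((α - 1) * F c + 1) ^ K = c / D) ↔ g c = 0 := by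
    intro c; simp only [hgdef, sub_eq_zero]
  have h0mem : (0:ℝ) ∈ Icc 0 c_max := ⟨le_refl 0, hcmax.le⟩
  have hmmem : c_max ∈ Icc 0 c_max := ⟨hcmax.le, le_refl c_max⟩
  have hF01 : ∀ c ∈ Icc (0:ℝ) c_max, 0 ≤ F c ∧ F c ≤ 1 := by
    intro c hc
    constructor
    · rw [← hF0]; exact hFmono h0mem hc hc.1
    · rw [← hFmax]; exact hFmono hc hmmem hc.2
  have hbase_pos : ∀ c ∈ Icc (0:ℝ) c_max, 0 < (α - 1) * F c + 1 := by
    intro c hc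
    obtain ⟨h1, h2⟩ := hF01 c hc
    nlinarith [mul_nonneg (by linarith : (0:ℝ) ≤ 1 - α) (by linarith : 0 ≤ 1 - F c)]
  have hg0 : g 0 = -1 := by simp [hgdef, hF0]; norm_num
  have hgm : g c_max = 1 - 2 * α ^ K - c_max / D := by
    simp only [hgdef, hFmax, mul_one]
    ring_nf
  have hgmpos : 0 < g c_max := by
    rw [hgm]
    have : c_max / D < 1 - 2 * α ^ K := by
      rw [div_lt_iff₀ hD]; nlinarith
    linarith
  have hgcont : ContinuousOn g (Icc 0 c_max) := by
    apply ContinuousOn.sub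
    · exact continuousOn_const.sub (continuousOn_const.mul
        (((continuousOn_const.mul hFcont).add continuousOn_const).pow K))
    · exact (continuous_id.div_const D).continuousOn
  -- existence
  have hivt := intermediate_value_Ioo hcmax.le hgcont
    (a := 0) (show (0:ℝ) ∈ Ioo (g 0) (g c_max) by rw [hg0]; exact ⟨by norm_num, hgmpos⟩)
  obtain ⟨c, hcmem, hgc⟩ := hivt
  -- key: no two distinct zeros
  have key : ∀ a b : ℝ, a ∈ Ioo 0 c_max → b ∈ Ioo 0 c_max → a < b →
      g a = 0 → g b = 0 → False := by
    intro a b ha hb hab hga hgb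
    have hamem : a ∈ Icc (0:ℝ) c_max := ⟨ha.1.le, ha.2.le⟩
    have hbmem : b ∈ Icc (0:ℝ) c_max := ⟨hb.1.le, hb.2.le⟩
    have hden : 0 < c_max - a := by linarith [hb.2]
    set t := (c_max - b) / (c_max - a) with htdef
    set s := (b - a) / (c_max - a) with hsdef
    have ht : 0 < t := div_pos (by linarith [hb.2]) hden
    have hs : 0 < s := div_pos (by linarith) hden
    have hts : t + s = 1 := by
      rw [htdef, hsdef]; field_simp; ring
    have hbcomb : b = t * a + s * c_max := by
      rw [htdef, hsdef]; field_simp; ring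
    -- strict concavity of F
    have hne : a ≠ c_max := by intro h; linarith [ha.2, hb.2]
    have hconc := hFconc.2 hamem hmmem hne ht hs hts
    rw [smul_eq_mul, smul_eq_mul, smul_eq_mul, smul_eq_mul, ← hbcomb, hFmax, mul_one] at hconc
    -- bases
    have hba : 0 < (α - 1) * F a + 1 := hbase_pos a hamem
    have hbb : 0 < (α - 1) * F b + 1 := hbase_pos b hbmem
    -- base at b is strictly less than the mixture of bases
    have hmix : (α - 1) * F b + 1 < t * ((α - 1) * F a + 1) + s * α := by
      nlinarith [mul_pos (by linarith : (0:ℝ) < 1 - α)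
        (by linarith : 0 < F b - (t * F a + s * 1))]
    have hmixpos : 0 < t * ((α - 1) * F a + 1) + s * α := lt_trans hbb hmix
    have hpowlt : ((α - 1) * F b + 1) ^ K < (t * ((α - 1) * F a + 1) + s * α) ^ K :=
      pow_lt_pow_left₀ hmix hbb.le hKne
    -- convexity of pow
    have hconv := (convexOn_pow K).2 (Set.mem_Ici.2 hba.le) (Set.mem_Ici.2 hα0.le)
      ht.le hs.le hts
    rw [smul_eq_mul, smul_eq_mul, smul_eq_mul, smul_eq_mul] at hconv
    have hA : ((α - 1) * F b + 1) ^ K <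
        t * ((α - 1) * F a + 1) ^ K + s * α ^ K := lt_of_lt_of_le hpowlt hconv
    -- unfold g equalities
    have hga' : 1 - 2 * ((α - 1) * F a + 1) ^ K - a / D = 0 := hga
    have hgb' : 1 - 2 * ((α - 1) * F b + 1) ^ K - b / D = 0 := hgb
    have hgm' : 0 < 1 - 2 * α ^ K - c_max / D := by rw [← hgm]; exact hgmpos
    have hbD : b / D = t * (a / D) + s * (c_max / D) := by
      rw [hbcomb]; ring
    have e1 : t * (1 - 2 * ((α - 1) * F a + 1) ^ K - a / D) = 0 := by
      rw [hga']; ring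
    have e2 : 0 < s * (1 - 2 * α ^ K - c_max / D) := mul_pos hs hgm'
    linarith [hA, hgb', hbD, e1, e2, hts]
  refine ⟨c, ⟨hcmem, (heq c).2 hgc⟩, ?_⟩
  rintro y ⟨hymem, hy⟩
  have hgy : g y = 0 := (heq y).1 hy
  rcases lt_trichotomy y c with h | h | h
  · exact (key y c hymem hcmem h hgy hgc).elim
  · exact h
  · exact (key c y hcmem hymem h hgc hgy).elim
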